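/- In the minimal process language, for every process E there exists a concrete process Ē (having no inert τ-transitions in any derivative) such that E ≈_b Ē, and moreover the axiom system consisting of A1–A4 together with the branching axiom B proves α.E = α.Ē for every action α. -/
import Mathlib


namespace NDB

/-- The minimal process language `E ::= 0 | α.E | E + E`. -/
inductive NE (Act : Type) : Type where
  | zero : NE Act
  | pre : Act → NE Act → NE Act
  | plus : NE Act → NE Act → NE Act

variable {Act : Type}

/-- The SOS transition relation. -/
inductive step : NE Act → Act → NE Act → Prop where
  | pre (α : Act) (E : NE Act) : step (.pre α E) α E
  | left {E₁ E₂ : NE Act} {α : Act} {E' : NE Act} :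
      step E₁ α E' → step (.plus E₁ E₂) α E'
  | right {E₁ E₂ : NE Act} {α : Act} {E' : NE Act} :
      step E₂ α E' → step (.plus E₁ E₂) α E'

variable (τ : Act)

/-- `E →(α) E'` : a transition, or a vacuous step when `α = τ`. -/
def opt (E : NE Act) (α : Act) (E' : NE Act) : Prop :=
  step E α E' ∨ (α = τ ∧ E' = E)

/-- `E ⟹ E'` : the reflexive-transitive closure of `→(τ)`. -/
def wk : NE Act → NE Act → Prop :=
  Relation.ReflTransGen (fun E E' => opt τ E τ E')

/-- Branching bisimulation relations. -/
def IsBB (R : NE Act → NE Act → Prop) : Prop :=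
  Symmetric R ∧ ∀ E F α E', R E F → step E α E' →
    ∃ F₁ F₂, wk τ F F₁ ∧ opt τ F₁ α F₂ ∧ R E F₁ ∧ R E' F₂

/-- Branching bisimilarity `≈_b`. -/
def bb (E F : NE Act) : Prop := ∃ R, IsBB τ R ∧ R E F

/-- Rooted branching bisimilarity `≈_rb`. -/
def rbb (E F : NE Act) : Prop :=
  (∀ α E', step E α E' → ∃ F', step F α F' ∧ bb τ E' F') ∧
  (∀ α F', step F α F' → ∃ E', step E α E' ∧ bb τ E' F')

/-- Strong bisimulation relations. -/
def IsSB (R : NE Act → NE Act → Prop) : Prop :=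
  Symmetric R ∧ ∀ E F α E', R E F → step E α E' →
    ∃ F', step F α F' ∧ R E' F'

/-- Strong bisimilarity `∼`. -/
def sb (E F : NE Act) : Prop := ∃ R, IsSB R ∧ R E F

/-- `reach E E'` : `E'` is a derivative of `E`. -/
def reach : NE Act → NE Act → Prop :=
  Relation.ReflTransGen (fun E E' => ∃ α, step E α E')

/-- A process is concrete iff no derivative has an inert `τ`-transition. -/
def Concrete (E : NE Act) : Prop :=
  ∀ E', reach E E' → ∀ E'', step E' τ E'' → ¬ bb τ E' E''

/-- Provable equality in the theory `AX^b` (axioms A1–A4 and B). -/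
inductive AXb (τ : Act) : NE Act → NE Act → Prop where
  | refl (E) : AXb τ E E
  | symm {E F} : AXb τ E F → AXb τ F E
  | trans {E F G} : AXb τ E F → AXb τ F G → AXb τ E G
  | congPre (α : Act) {E F} : AXb τ E F → AXb τ (.pre α E) (.pre α F)
  | congPlusL {E E' F} : AXb τ E E' → AXb τ (.plus E F) (.plus E' F)
  | congPlusR {E F F'} : AXb τ F F' → AXb τ (.plus E F) (.plus E F')
  | A1 (E F) : AXb τ (.plus E F) (.plus F E)
  | A2 (E F G) : AXb τ (.plus (.plus E F) G) (.plus E (.plus F G))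
  | A3 (E) : AXb τ (.plus E E) E
  | A4 (E) : AXb τ (.plus E .zero) E
  | B (α : Act) (E F) :
      AXb τ (.pre α (.plus F (.pre τ (.plus E F)))) (.pre α (.plus E F))



/- ======== auxiliary development ======== -/

def size : NE Act → Nat
  | .zero => 1
  | .pre _ E => size E + 1
  | .plus E F => size E + size F + 1

lemma size_pos (E : NE Act) : 1 ≤ size E := by
  cases E <;> simp only [size] <;> omega

lemma step_size {E : NE Act} {a : Act} {E' : NE Act} (h : step E a E') :
    size E' < size E := by
  induction h with
  | pre => simp only [size]; omega
  | left _ ih => simp only [size]; omega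
  | right _ ih => simp only [size]; omega

/- ---- semantic lemmas about bb ---- -/

lemma bb_refl (E : NE Act) : bb τ E E :=
  ⟨Eq, ⟨fun _ _ h => h.symm, by
    rintro E F α E' rfl hstep
    exact ⟨E, E', Relation.ReflTransGen.refl, Or.inl hstep, rfl, rfl⟩⟩, rfl⟩

lemma bb_symm {E F : NE Act} (h : bb τ E F) : bb τ F E := by
  obtain ⟨R, hR, hEF⟩ := h
  exact ⟨R, hR, hR.1 hEF⟩

lemma bb_step {E F : NE Act} {a : Act} {E' : NE Act} (h : bb τ E F) (hs : step E a E') :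
    ∃ F₁ F₂, wk τ F F₁ ∧ opt τ F₁ a F₂ ∧ bb τ E F₁ ∧ bb τ E' F₂ := by
  obtain ⟨R, hR, hEF⟩ := h
  obtain ⟨F₁, F₂, h1, h2, h3, h4⟩ := hR.2 E F a E' hEF hs
  exact ⟨F₁, F₂, h1, h2, ⟨R, hR, h3⟩, ⟨R, hR, h4⟩⟩

lemma bb_wk {E F E' : NE Act} (h : bb τ E F) (hw : wk τ E E') :
    ∃ F', wk τ F F' ∧ bb τ E' F' := by
  induction hw with
  | refl => exact ⟨F, Relation.ReflTransGen.refl, h⟩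
  | tail _ hstep ih =>
    obtain ⟨F', hwF, hbb⟩ := ih
    rcases hstep with hreal | ⟨_, rfl⟩
    · obtain ⟨F₁, F₂, hw1, hopt, _, hb2⟩ := bb_step τ hbb hreal
      rcases hopt with hreal2 | ⟨_, heq⟩
      · exact ⟨F₂, (hwF.trans hw1).trans (Relation.ReflTransGen.single (Or.inl hreal2)), hb2⟩
      · exact ⟨F₁, hwF.trans hw1, heq ▸ hb2⟩
    · exact ⟨F', hwF, hbb⟩

lemma bb_trans {E F G : NE Act} (h1 : bb τ E F) (h2 : bb τ F G) : bb τ E G := by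
  refine ⟨fun X Z => ∃ Y, bb τ X Y ∧ bb τ Y Z, ⟨?_, ?_⟩, F, h1, h2⟩
  · rintro X Z ⟨Y, a, b⟩
    exact ⟨Y, bb_symm τ b, bb_symm τ a⟩
  · rintro X Z a X' ⟨Y, hXY, hYZ⟩ hs
    obtain ⟨Y₁, Y₂, hw, hopt, hXY₁, hX'Y₂⟩ := bb_step τ hXY hs
    obtain ⟨Z₁, hwZ, hY₁Z₁⟩ := bb_wk τ hYZ hw
    rcases hopt with hreal | ⟨ha, hb⟩
    · obtain ⟨Z₂, Z₃, hw2, hopt2, hY₁Z₂, hY₂Z₃⟩ := bb_step τ hY₁Z₁ hreal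
      exact ⟨Z₂, Z₃, hwZ.trans hw2, hopt2, ⟨Y₁, hXY₁, hY₁Z₂⟩, ⟨Y₂, hX'Y₂, hY₂Z₃⟩⟩
    · exact ⟨Z₁, Z₁, hwZ, Or.inr ⟨ha, rfl⟩, ⟨Y₁, hXY₁, hY₁Z₁⟩, ⟨Y₁, hb ▸ hX'Y₂, hY₁Z₁⟩⟩

lemma bb_stutter {E M F : NE Act} (hEF : bb τ E F) (h1 : wk τ E M) (h2 : wk τ M F) :
    bb τ E M := by
  refine ⟨fun X Y => bb τ X Y ∨ (wk τ Y X ∧ ∃ Fx, wk τ X Fx ∧ bb τ Y Fx) ∨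
      (wk τ X Y ∧ ∃ Fx, wk τ Y Fx ∧ bb τ X Fx), ⟨?_, ?_⟩,
    Or.inr (Or.inr ⟨h1, F, h2, hEF⟩)⟩
  · rintro X Y (h | h | h)
    · exact Or.inl (bb_symm τ h)
    · exact Or.inr (Or.inr h)
    · exact Or.inr (Or.inl h)
  · rintro X Y a X' (hbb | ⟨hYX, Fx, hXF, hbbYF⟩ | ⟨hXY, Fx, hYF, hbbXF⟩) hs
    · obtain ⟨F₁, F₂, hw, hopt, hb1, hb2⟩ := bb_step τ hbb hs
      exact ⟨F₁, F₂, hw, hopt, Or.inl hb1, Or.inl hb2⟩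
    · obtain ⟨Fx', hwFx, hbbXFx'⟩ := bb_wk τ hbbYF hYX
      obtain ⟨F₁, F₂, hw1, hopt, hb1, hb2⟩ := bb_step τ hbbXFx' hs
      exact ⟨F₁, F₂, ((hYX.trans hXF).trans hwFx).trans hw1, hopt, Or.inl hb1, Or.inl hb2⟩
    · obtain ⟨F₁, F₂, hw1, hopt, hb1, hb2⟩ := bb_step τ hbbXF hs
      exact ⟨F₁, F₂, hYF.trans hw1, hopt, Or.inl hb1, Or.inl hb2⟩

/- ---- concreteness ---- -/

lemma concrete_reach {X Y : NE Act} (h : Concrete τ X) (hr : reach X Y) : Concrete τ Y :=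
  fun E' h1 E'' h2 => h E' (hr.trans h1) E'' h2

lemma concrete_step {X Y : NE Act} {a : Act} (h : Concrete τ X) (hs : step X a Y) :
    Concrete τ Y :=
  concrete_reach τ h (Relation.ReflTransGen.single ⟨a, hs⟩)

lemma concrete_wk {G F : NE Act} (hc : Concrete τ G) (hw : wk τ G F) :
    bb τ G F → F = G := by
  induction hw with
  | refl => intro _; rfl
  | @tail M F hGM h2 ih =>
    intro hb
    have hbGM : bb τ G M := bb_stutter τ hb hGM (Relation.ReflTransGen.single h2)
    have hMG : M = G := ih hbGM
    subst hMG
    rcases h2 with hreal | ⟨_, rfl⟩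
    · exact absurd hb (hc M Relation.ReflTransGen.refl F hreal)
    · rfl

/- ---- strong bisimilarity ---- -/

lemma sb_symm {E F : NE Act} (h : sb E F) : sb F E := by
  obtain ⟨R, hR, hEF⟩ := h
  exact ⟨R, hR, hR.1 hEF⟩

lemma sb_step {E F : NE Act} {a : Act} {E' : NE Act} (h : sb E F) (hs : step E a E') :
    ∃ F', step F a F' ∧ sb E' F' := by
  obtain ⟨R, hR, hEF⟩ := h
  obtain ⟨F', h1, h2⟩ := hR.2 E F a E' hEF hs
  exact ⟨F', h1, ⟨R, hR, h2⟩⟩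

lemma sb_of_bb {E F : NE Act} (h : bb τ E F) (hE : Concrete τ E) (hF : Concrete τ F) :
    sb E F := by
  refine ⟨fun X Y => bb τ X Y ∧ Concrete τ X ∧ Concrete τ Y, ⟨?_, ?_⟩, h, hE, hF⟩
  · rintro X Y ⟨h1, h2, h3⟩
    exact ⟨bb_symm τ h1, h3, h2⟩
  · rintro X Y a X' ⟨hXY, hcX, hcY⟩ hs
    obtain ⟨F₁, F₂, hw, hopt, hb1, hb2⟩ := bb_step τ hXY hs
    have hYF₁ : bb τ Y F₁ := bb_trans τ (bb_symm τ hXY) hb1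
    have hF₁Y : F₁ = Y := concrete_wk τ hcY hw hYF₁
    subst hF₁Y
    rcases hopt with hreal | ⟨ha, hb⟩
    · exact ⟨F₂, hreal, hb2, concrete_step τ hcX hs, concrete_step τ hcY hreal⟩
    · have : bb τ X X' := bb_trans τ hXY (bb_symm τ (hb ▸ hb2))
      exact absurd this (hcX X Relation.ReflTransGen.refl X' (ha ▸ hs))

/- ---- syntactic lemmas ---- -/

lemma plusCong {E E' F F' : NE Act} (h1 : AXb τ E E') (h2 : AXb τ F F') :
    AXb τ (.plus E F) (.plus E' F') :=
  (AXb.congPlusL h1).trans (AXb.congPlusR h2)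

lemma absorb_self {E : NE Act} {β : Act} {G : NE Act} (h : step E β G) :
    AXb τ (.plus E (.pre β G)) E := by
  induction h with
  | pre => exact AXb.A3 _
  | left _ ih =>
    exact (AXb.A2 _ _ _).trans ((AXb.congPlusR (AXb.A1 _ _)).trans
      (((AXb.A2 _ _ _).symm).trans (AXb.congPlusL ih)))
  | right _ ih =>
    exact (AXb.A2 _ _ _).trans (AXb.congPlusR ih)

lemma absorb_all {G : NE Act} :
    ∀ F : NE Act, (∀ β H, step F β H → AXb τ (.plus G (.pre β H)) G) →
      AXb τ (.plus G F) G
  | .zero, _ => AXb.A4 G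
  | .pre β H, h => h β H (step.pre β H)
  | .plus F₁ F₂, h =>
    (((AXb.A2 _ _ _).symm).trans
      (AXb.congPlusL (absorb_all F₁ fun β H hs => h β H (step.left hs)))).trans
      (absorb_all F₂ fun β H hs => h β H (step.right hs))

lemma nf1 {G : NE Act} :
    ∀ S : NE Act,
      (∀ β H, step S β H → AXb τ (.plus G (.pre β H)) G ∨ (β = τ ∧ AXb τ H G)) →
      ∃ D, AXb τ (.plus G D) G ∧ (AXb τ S D ∨ AXb τ S (.plus D (.pre τ G))) := by
  intro S
  induction S with
  | zero => exact fun _ => ⟨.zero, AXb.A4 G, Or.inl (AXb.refl _)⟩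
  | pre β H _ =>
    intro h
    rcases h β H (step.pre β H) with habs | ⟨hβ, hHG⟩
    · exact ⟨.pre β H, habs, Or.inl (AXb.refl _)⟩
    · refine ⟨.zero, AXb.A4 G, Or.inr ?_⟩
      rw [hβ]
      exact (AXb.congPre τ hHG).trans (((AXb.A4 _).symm).trans (AXb.A1 _ _))
  | plus S₁ S₂ ih₁ ih₂ =>
    intro h
    obtain ⟨D₁, ha₁, hf₁⟩ := ih₁ (fun β H hs => h β H (step.left hs))
    obtain ⟨D₂, ha₂, hf₂⟩ := ih₂ (fun β H hs => h β H (step.right hs))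
    refine ⟨.plus D₁ D₂, ((AXb.A2 _ _ _).symm).trans ((AXb.congPlusL ha₁).trans ha₂), ?_⟩
    rcases hf₁ with h1 | h1 <;> rcases hf₂ with h2 | h2
    · exact Or.inl (plusCong τ h1 h2)
    · exact Or.inr ((plusCong τ h1 h2).trans ((AXb.A2 _ _ _).symm))
    · exact Or.inr ((plusCong τ h1 h2).trans ((AXb.A2 _ _ _).trans
        ((AXb.congPlusR (AXb.A1 _ _)).trans ((AXb.A2 _ _ _).symm))))
    · exact Or.inr ((plusCong τ h1 h2).trans ((AXb.A2 _ _ _).trans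
        ((AXb.congPlusR ((AXb.A1 _ _).trans ((AXb.A2 _ _ _).trans
          (AXb.congPlusR (AXb.A3 _))))).trans ((AXb.A2 _ _ _).symm))))

/- ---- completeness of A1-A4 for strong bisimilarity ---- -/

lemma sb_AXb : ∀ n : Nat, ∀ H K : NE Act, size H + size K ≤ n → sb H K → AXb τ H K := by
  intro n
  induction n with
  | zero =>
    intro H K hsz _
    have := size_pos H; have := size_pos K
    omega
  | succ n ih =>
    intro H K hsz hsb
    have key : ∀ A B : NE Act, size A + size B ≤ n + 1 → sb A B →
        AXb τ (.plus B A) B := by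
      intro A B hs hAB
      refine absorb_all τ A ?_
      intro β H' hstep
      obtain ⟨K', hK', hsb'⟩ := sb_step hAB hstep
      have hsize1 := step_size hstep
      have hsize2 := step_size hK'
      have hax : AXb τ H' K' := ih H' K' (by omega) hsb'
      exact (AXb.congPlusR (AXb.congPre β hax)).trans (absorb_self τ hK')
    exact (((key K H (by omega) (sb_symm hsb)).symm).trans (AXb.A1 _ _)).trans
      (key H K hsz hsb)

/- ---- rooted branching bisimilarity helpers ---- -/

lemma bb_of_rbb {E F : NE Act} (h : rbb τ E F) : bb τ E F := by
  refine ⟨fun A B => bb τ A B ∨ rbb τ A B ∨ rbb τ B A, ⟨?_, ?_⟩, Or.inr (Or.inl h)⟩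
  · rintro A B (h | h | h)
    · exact Or.inl (bb_symm τ h)
    · exact Or.inr (Or.inr h)
    · exact Or.inr (Or.inl h)
  · rintro A B a A' (hbb | hr | hr) hs
    · obtain ⟨F₁, F₂, hw, hopt, hb1, hb2⟩ := bb_step τ hbb hs
      exact ⟨F₁, F₂, hw, hopt, Or.inl hb1, Or.inl hb2⟩
    · obtain ⟨B', hsB, hb⟩ := hr.1 a A' hs
      exact ⟨B, B', Relation.ReflTransGen.refl, Or.inl hsB, Or.inr (Or.inl hr), Or.inl hb⟩
    · obtain ⟨B', hsB, hb⟩ := hr.2 a A' hs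
      exact ⟨B, B', Relation.ReflTransGen.refl, Or.inl hsB, Or.inr (Or.inr hr),
        Or.inl (bb_symm τ hb)⟩

lemma rbb_refl (E : NE Act) : rbb τ E E :=
  ⟨fun _ E' hs => ⟨E', hs, bb_refl τ E'⟩, fun _ F' hs => ⟨F', hs, bb_refl τ F'⟩⟩

lemma rbb_plus {E F G H : NE Act} (h1 : rbb τ E F) (h2 : rbb τ G H) :
    rbb τ (.plus E G) (.plus F H) := by
  constructor
  · intro a X hs
    cases hs with
    | left hs => obtain ⟨F', h', hb⟩ := h1.1 a X hs; exact ⟨F', step.left h', hb⟩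
    | right hs => obtain ⟨H', h', hb⟩ := h2.1 a X hs; exact ⟨H', step.right h', hb⟩
  · intro a X hs
    cases hs with
    | left hs => obtain ⟨E', h', hb⟩ := h1.2 a X hs; exact ⟨E', step.left h', hb⟩
    | right hs => obtain ⟨G', h', hb⟩ := h2.2 a X hs; exact ⟨G', step.right h', hb⟩

lemma rbb_pre {X Y : NE Act} (h : bb τ X Y) (α : Act) :
    rbb τ (.pre α X) (.pre α Y) := by
  constructor
  · intro a Z hs
    cases hs with
    | pre => exact ⟨Y, step.pre α Y, h⟩
  · intro a Z hs
    cases hs with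
    | pre => exact ⟨X, step.pre α X, h⟩

/- ---- the main absorption argument ---- -/

lemma main_absorb {P G : NE Act} (hbb : bb τ P G) (hcG : Concrete τ G)
    (hbody : ∀ β H, step P β H → Concrete τ H) (hstep : step P τ G) (α : Act) :
    AXb τ (.pre α P) (.pre α G) := by
  have cond : ∀ β H, step P β H →
      AXb τ (.plus G (.pre β H)) G ∨ (β = τ ∧ AXb τ H G) := by
    intro β H hs
    obtain ⟨F₁, F₂, hw, hopt, h1, h2⟩ := bb_step τ hbb hs
    have hGF₁ : bb τ G F₁ := bb_trans τ (bb_symm τ hbb) h1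
    have hF₁G : F₁ = G := concrete_wk τ hcG hw hGF₁
    rw [hF₁G] at hopt
    rcases hopt with hreal | ⟨ha, hb⟩
    · left
      have hF₂c : Concrete τ F₂ := concrete_step τ hcG hreal
      have hax : AXb τ H F₂ :=
        sb_AXb τ (size H + size F₂) H F₂ le_rfl (sb_of_bb τ h2 (hbody β H hs) hF₂c)
      exact (AXb.congPlusR (AXb.congPre β hax)).trans (absorb_self τ hreal)
    · right
      exact ⟨ha, sb_AXb τ (size H + size G) H G le_rfl
        (sb_of_bb τ (hb ▸ h2) (hbody β H hs) hcG)⟩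
  obtain ⟨D, habs, hform⟩ := nf1 τ P cond
  have hPD : AXb τ P (.plus D (.pre τ G)) := by
    rcases hform with h | h
    · exact ((absorb_self τ hstep).symm).trans (AXb.congPlusL h)
    · exact h
  exact (AXb.congPre α hPD).trans
    (((AXb.congPre α (AXb.congPlusR (AXb.congPre τ habs.symm))).trans
      (AXb.B α G D)).trans (AXb.congPre α habs))

/- ---- the normalisation of summand bodies ---- -/

lemma build (n : Nat)
    (ih : ∀ F : NE Act, size F < n → ∃ Fb, Concrete τ Fb ∧ bb τ F Fb ∧
      ∀ α : Act, AXb τ (.pre α F) (.pre α Fb)) :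
    ∀ S : NE Act, size S ≤ n →
      ∃ P, AXb τ S P ∧ rbb τ S P ∧ ∀ β H, step P β H → Concrete τ H := by
  intro S
  induction S with
  | zero =>
    exact fun _ => ⟨.zero, AXb.refl _, rbb_refl τ _, fun β H hs => by cases hs⟩
  | pre α F _ =>
    intro hsz
    obtain ⟨Fb, hc, hbbF, hax⟩ := ih F (by simp only [size] at hsz; omega)
    refine ⟨.pre α Fb, hax α, rbb_pre τ hbbF α, ?_⟩
    intro β H hs
    cases hs with
    | pre => exact hc
  | plus S₁ S₂ ih₁ ih₂ =>
    intro hsz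
    obtain ⟨P₁, ha₁, hr₁, hb₁⟩ := ih₁ (by simp only [size] at hsz; omega)
    obtain ⟨P₂, ha₂, hr₂, hb₂⟩ := ih₂ (by simp only [size] at hsz; omega)
    refine ⟨.plus P₁ P₂, plusCong τ ha₁ ha₂, rbb_plus τ hr₁ hr₂, ?_⟩
    intro β H hs
    cases hs with
    | left hs => exact hb₁ β H hs
    | right hs => exact hb₂ β H hs


/-- Every process is branching bisimilar to a concrete process, provably equal
under any prefix in `AX^b`. -/
theorem statement10 {Act : Type} (τ : Act) (E : NE Act) :
    ∃ Ebar : NE Act, Concrete τ Ebar ∧ bb τ E Ebar ∧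
      ∀ α : Act, AXb τ (.pre α E) (.pre α Ebar) := by
  suffices h : ∀ n : Nat, ∀ E : NE Act, size E ≤ n →
      ∃ Ebar : NE Act, Concrete τ Ebar ∧ bb τ E Ebar ∧
        ∀ α : Act, AXb τ (.pre α E) (.pre α Ebar) from h (size E) E le_rfl
  intro n
  induction n with
  | zero =>
    intro E hE
    have := size_pos E
    omega
  | succ n ihn =>
    intro E hE
    obtain ⟨P, hax, hrbb, hbody⟩ :=
      build τ (size E) (fun F hF => ihn F (by omega)) E le_rfl
    by_cases hc : ∃ G, step P τ G ∧ bb τ P G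
    · obtain ⟨G, hsG, hbbPG⟩ := hc
      exact ⟨G, hbody τ G hsG, bb_trans τ (bb_of_rbb τ hrbb) hbbPG,
        fun α => (AXb.congPre α hax).trans
          (main_absorb τ hbbPG (hbody τ G hsG) hbody hsG α)⟩
    · refine ⟨P, ?_, bb_of_rbb τ hrbb, fun α => AXb.congPre α hax⟩
      intro E' hr E'' hs hbbE
      rcases Relation.ReflTransGen.cases_head hr with rfl | ⟨M, ⟨β, hstepM⟩, hr'⟩
      · exact hc ⟨E'', hs, hbbE⟩
      · exact concrete_reach τ (hbody β M hstepM) hr' E' Relation.ReflTransGen.refl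
          E'' hs hbbE


end NDB
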